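/- Let β = (β₁,...,βₙ) with 1 > |β₁| ≥ ... ≥ |βₙ| > 0 and let r = max{|p| : ∃j, βⱼ = β^p} be the maximal resonance length. Then every β sub-resonant polynomial transformation P ∈ G^r_β is a polynomial map of degree at most r, and for every k ≥ r the k-jet at 0 map G^r_β → 𝒟^k(ℂⁿ) is an injective group homomorphism (so G^k_β = G^r_β for k ≥ r). -/

import Mathlib

open Finset

noncomputable section

/-- `bpow β p = ∏ᵢ βᵢ ^ pᵢ`. -/
def bpow {n : ℕ} (β : Fin n → ℂ) (p : Fin n → ℕ) : ℂ := ∏ i, β i ^ p i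

/-- `𝒫ⱼ`: the set of resonances of `βⱼ`, i.e. `p ∈ ℕⁿ` with `βⱼ = β^p` and
`p ≠ eₖ` for all `k ≥ j`. -/
def resSet {n : ℕ} (β : Fin n → ℂ) (j : Fin n) : Set (Fin n → ℕ) :=
  {p | β j = bpow β p ∧ ∀ k : Fin n, j ≤ k → p ≠ fun i => if i = k then 1 else 0}

/-- `𝒬ⱼ`: the set of nonzero multi-indices componentwise bounded by some
resonance of `βⱼ`. -/
def subResSet {n : ℕ} (β : Fin n → ℂ) (j : Fin n) : Set (Fin n → ℕ) :=
  {q | q ≠ 0 ∧ ∃ p ∈ resSet β j, ∀ l, q l ≤ p l}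

/-- A map `P : ℂⁿ → ℂⁿ` is β sub-resonant if
`P(z) = (a₁z₁, a₂z₂ + P₂(z₁), ..., aₙzₙ + Pₙ(z₁,...,z_{n-1}))` with all `aⱼ ≠ 0`
and each `Pⱼ` a linear combination of monomials `z^q` with `q ∈ 𝒬ⱼ` depending
only on the variables `z₁, ..., z_{j-1}`. -/
def IsSubResonant {n : ℕ} (β : Fin n → ℂ) (P : (Fin n → ℂ) → (Fin n → ℂ)) : Prop :=
  ∃ (a : Fin n → ℂ) (c : Fin n → ((Fin n → ℕ) →₀ ℂ)),
    (∀ j, a j ≠ 0) ∧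
    (∀ j q, c j q ≠ 0 → q ∈ subResSet β j ∧ ∀ i, j ≤ i → q i = 0) ∧
    ∀ (z : Fin n → ℂ) (j : Fin n),
      P z j = a j * z j + (c j).sum fun q coef => coef * ∏ i, z i ^ q i

namespace SubResAux

variable {n : ℕ}

def e (k : Fin n) : Fin n → ℕ := fun i => if i = k then 1 else 0

lemma e_ne_zero (k : Fin n) : e k ≠ 0 := by
  intro h
  have := congrFun h k
  simp [e] at this

lemma sum_e (k : Fin n) : ∑ i, e k i = 1 := by simp [e]

lemma eq_of_e_eq {k l : Fin n} (h : e k = e l) : k = l := by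
  have := congrFun h k
  simp [e] at this
  by_contra hkl
  simp_all

lemma bpow_add (β : Fin n → ℂ) (p q : Fin n → ℕ) :
    bpow β (p + q) = bpow β p * bpow β q := by
  simp [bpow, Pi.add_apply, pow_add, Finset.prod_mul_distrib]

lemma bpow_zero (β : Fin n → ℂ) : bpow β 0 = 1 := by simp [bpow]

lemma bpow_e (β : Fin n → ℂ) (k : Fin n) : bpow β (e k) = β k := by
  simp [bpow, e]

lemma sum_eq_zero_iff' {f : Fin n → ℕ} : (∑ i, f i) = 0 ↔ f = 0 := by
  rw [Finset.sum_eq_zero_iff]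
  constructor
  · intro h; funext i; exact h i (Finset.mem_univ i)
  · intro h i _; rw [h]; rfl

/-- the allowed monomials in component `j`, plus the identity monomial `e j`. -/
def M (β : Fin n → ℂ) (j : Fin n) : Set (Fin n → ℕ) :=
  insert (e j) {q | q ∈ subResSet β j ∧ ∀ i, j ≤ i → q i = 0}

lemma elem_bound {β : Fin n → ℂ} {j : Fin n} {m : Fin n → ℕ} (hm : m ∈ M β j) :
    ∃ p, (∀ l, m l ≤ p l) ∧ β j = bpow β p ∧ 1 ≤ ∑ l, m l ∧
      (∀ k, p = e k → k ≤ j) ∧ (∀ l, j < l → m l = 0) := by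
  rcases hm with h | ⟨⟨hm0, p, ⟨hres, hne⟩, hle⟩, hsupp⟩
  · refine ⟨e j, by simp [h], (bpow_e β j).symm, by simp [h, sum_e], ?_, ?_⟩
    · intro k hk; exact (eq_of_e_eq hk.symm).le
    · intro l hl; subst h; simp [e]; omega
  · refine ⟨p, hle, hres, ?_, ?_, fun l hl => hsupp l hl.le⟩
    · by_contra hs
      push_neg at hs
      exact hm0 (sum_eq_zero_iff'.mp (by omega))
    · intro k hk
      by_contra hkj
      exact hne k (le_of_not_ge hkj) hk

/-- `k`-fold sumsets. -/
def nfold : ℕ → Set (Fin n → ℕ) → Set (Fin n → ℕ)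
  | 0, _ => {0}
  | (k+1), A => {x | ∃ a ∈ A, ∃ b ∈ nfold k A, x = a + b}

lemma nfold_bound {β : Fin n → ℂ} {j : Fin n} :
    ∀ {k : ℕ} {s : Fin n → ℕ}, s ∈ nfold k (M β j) →
    ∃ p, (∀ l, s l ≤ p l) ∧ bpow β p = (β j) ^ k ∧ k ≤ ∑ l, s l ∧
      (∀ k', p = e k' → k = 1 ∧ k' ≤ j) ∧ (∀ l, j < l → s l = 0) := by
  intro k
  induction k with
  | zero =>
    intro s hs
    rcases hs with rfl
    exact ⟨0, fun l => le_rfl, by simp [bpow_zero], by simp, fun k' h => absurd h.symm (e_ne_zero k'), by simp⟩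
  | succ k ih =>
    rintro s ⟨m, hm, b, hb, rfl⟩
    obtain ⟨pm, hpm, hbm, hsm, hem, hvm⟩ := elem_bound hm
    obtain ⟨pb, hpb, hbb, hsb, heb, hvb⟩ := ih hb
    refine ⟨pm + pb, fun l => add_le_add (hpm l) (hpb l), ?_, ?_, ?_, ?_⟩
    · rw [bpow_add, ← hbm, hbb, pow_succ']
    · have : ∑ l, (m + b) l = (∑ l, m l) + ∑ l, b l := by
        simp [Pi.add_apply, Finset.sum_add_distrib]
      omega
    · intro k' hk'
      have hsum : (∑ l, pm l) + (∑ l, pb l) = 1 := by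
        have := congrArg (fun f => ∑ l, f l) hk'
        simp only [Pi.add_apply, Finset.sum_add_distrib] at this
        rw [this, sum_e]
      have h1 : 1 ≤ ∑ l, pm l := le_trans hsm (Finset.sum_le_sum fun l _ => hpm l)
      have hpb0 : pb = 0 := sum_eq_zero_iff'.mp (by omega)
      have hk0 : k = 0 := by
        have : ∑ l, b l = 0 := by
          have := Finset.sum_le_sum fun l (_ : l ∈ Finset.univ) => hpb l
          rw [hpb0] at this
          simpa using this
        omega
      subst hk0
      have : pm = e k' := by rw [← hk']; funext l; simp [hpb0]
      exact ⟨rfl, hem k' this⟩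
    · intro l hl
      simp [Pi.add_apply, hvm l hl, hvb l hl]

lemma combine {β : Fin n → ℂ} {q : Fin n → ℕ} {s : Fin n → (Fin n → ℕ)}
    (S : Finset (Fin n))
    (hs : ∀ i ∈ S, s i ∈ nfold (q i) (M β i)) :
    ∃ p, (∀ l, (∑ i ∈ S, s i) l ≤ p l) ∧ bpow β p = ∏ i ∈ S, (β i) ^ (q i) ∧
      (∑ i ∈ S, q i) ≤ ∑ l, (∑ i ∈ S, s i) l ∧
      ∀ k, p = e k → ∃ i₀ ∈ S, k ≤ i₀ ∧ q i₀ = 1 ∧ ∀ i ∈ S, i ≠ i₀ → q i = 0 := by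
  classical
  induction S using Finset.induction with
  | empty =>
    exact ⟨0, by simp, by simp [bpow_zero], by simp,
      fun k h => absurd h.symm (e_ne_zero k)⟩
  | insert a S ha ih =>
    obtain ⟨pa, hpa, hba, hsa, hea, hva⟩ := nfold_bound (hs a (Finset.mem_insert_self a S))
    obtain ⟨pS, hpS, hbS, hsS, heS⟩ :=
      ih (fun i hi => hs i (Finset.mem_insert_of_mem hi))
    have hsuma : ∑ l, (∑ i ∈ insert a S, s i) l = (∑ l, s a l) + ∑ l, (∑ i ∈ S, s i) l := by
      simp [Finset.sum_insert ha, Pi.add_apply, Finset.sum_add_distrib]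
    refine ⟨pa + pS, ?_, ?_, ?_, ?_⟩
    · intro l
      simp only [Finset.sum_insert ha, Pi.add_apply]
      exact add_le_add (hpa l) (hpS l)
    · rw [bpow_add, hba, hbS, Finset.prod_insert ha]
    · rw [Finset.sum_insert ha, hsuma]
      exact add_le_add hsa hsS
    · intro k hk
      have hsum : (∑ l, pa l) + (∑ l, pS l) = 1 := by
        have := congrArg (fun f => ∑ l, f l) hk
        simp only [Pi.add_apply, Finset.sum_add_distrib] at this
        rw [this, sum_e]
      rcases Nat.eq_zero_or_pos (∑ l, pa l) with h0 | h1
      · -- pa = 0, so q a = 0 and pS = e k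
        have hpa0 : pa = 0 := sum_eq_zero_iff'.mp h0
        have hqa : q a = 0 := by
          have hsa0 : ∑ l, s a l = 0 := by
            have := Finset.sum_le_sum fun l (_ : l ∈ Finset.univ) => hpa l
            rw [hpa0] at this; simpa using this
          omega
        have hpS' : pS = e k := by rw [← hk]; funext l; simp [hpa0]
        obtain ⟨i₀, hi₀S, hki₀, hqi₀, hrest⟩ := heS k hpS'
        refine ⟨i₀, Finset.mem_insert_of_mem hi₀S, hki₀, hqi₀, ?_⟩
        intro i hi hne
        rcases Finset.mem_insert.mp hi with rfl | hiS
        · exact hqa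
        · exact hrest i hiS hne
      · -- pa = e k, pS = 0
        have hpS0 : pS = 0 := sum_eq_zero_iff'.mp (by omega)
        have hqS : ∀ i ∈ S, q i = 0 := by
          have hS0 : ∑ l, (∑ i ∈ S, s i) l = 0 := by
            have := Finset.sum_le_sum fun l (_ : l ∈ Finset.univ) => hpS l
            rw [hpS0] at this; simpa using this
          have := hsS
          rw [hS0] at this
          intro i hi
          exact (Finset.sum_eq_zero_iff.mp (Nat.le_zero.mp this)) i hi
        have hpa' : pa = e k := by rw [← hk]; funext l; simp [hpS0]
        obtain ⟨hqa1, hka⟩ := hea k hpa'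
        exact ⟨a, Finset.mem_insert_self a S, hka, hqa1,
          fun i hi hne => hqS i ((Finset.mem_insert.mp hi).resolve_left hne)⟩

/-- Main closure lemma: substituting sub-resonant monomials into a sub-resonant
monomial for `j` gives a sub-resonant monomial for `j`. -/
lemma closure {β : Fin n → ℂ} {j : Fin n} {q : Fin n → ℕ}
    (hq : q ∈ subResSet β j) (hq0 : ∀ i, j ≤ i → q i = 0)
    {u : Fin n → (Fin n → ℕ)} (hu : ∀ i, u i ∈ nfold (q i) (M β i)) :
    (∑ i, u i) ∈ subResSet β j ∧ ∀ i, j ≤ i → (∑ l, u l) i = 0 := by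
  classical
  obtain ⟨hqne, p₀, ⟨hres₀, hne₀⟩, hle₀⟩ := hq
  obtain ⟨p, hp, hbp, hsum, hek⟩ := combine (β := β) Finset.univ (fun i _ => hu i)
  have hbq : ∏ i, (β i) ^ (q i) = bpow β q := rfl
  have hq1 : 1 ≤ ∑ i, q i := by
    by_contra h
    exact hqne (sum_eq_zero_iff'.mp (by omega))
  -- support of d vanishes at indices ≥ j
  have hdsupp : ∀ i, j ≤ i → (∑ l, u l) i = 0 := by
    intro i hi
    rw [Finset.sum_apply]
    apply Finset.sum_eq_zero
    intro l _
    rcases Nat.eq_zero_or_pos (q l) with h0 | h1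
    · have h2 := hu l
      rw [h0] at h2
      have h' : u l = 0 := h2
      simp [h']
    · -- q l ≠ 0 so l < j, hence l < i
      have hlj : l < j := by
        by_contra hc
        rw [hq0 l (le_of_not_gt hc)] at h1
        omega
      obtain ⟨_, _, _, _, _, hv⟩ := nfold_bound (hu l)
      exact hv i (lt_of_lt_of_le hlj hi)
  refine ⟨⟨?_, p + (p₀ - q), ⟨?_, ?_⟩, ?_⟩, hdsupp⟩
  · -- d ≠ 0
    intro h
    have : ∑ l, (∑ i, u i) l = 0 := by rw [h]; simp
    omega
  · -- β j = bpow β (p + (p₀ - q))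
    rw [bpow_add, hbp, hbq, ← bpow_add]
    have : q + (p₀ - q) = p₀ := by
      funext l; have := hle₀ l; simp [Pi.add_apply]; omega
    rw [this, hres₀]
  · -- not of the form e k for k ≥ j
    intro k hk hcontra
    have hcontra' : p + (p₀ - q) = e k := hcontra
    have hsump : (∑ l, p l) + (∑ l, (p₀ - q) l) = 1 := by
      have := congrArg (fun f => ∑ l, f l) hcontra'
      simp only [Pi.add_apply, Finset.sum_add_distrib] at this
      rw [this, sum_e]
    have h1p : 1 ≤ ∑ l, p l :=
      le_trans hq1 (le_trans hsum (Finset.sum_le_sum fun l _ => hp l))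
    have hrem : (p₀ - q : Fin n → ℕ) = 0 := sum_eq_zero_iff'.mp (by omega)
    have hpek : p = e k := by rw [← hcontra']; funext l; simp [hrem]
    obtain ⟨i₀, _, hki₀, hqi₀, _⟩ := hek k hpek
    rw [hq0 i₀ (le_trans hk hki₀)] at hqi₀
    exact one_ne_zero hqi₀.symm
  · -- d ≤ p + (p₀ - q)
    intro l
    exact le_trans (hp l) le_self_add

open MvPolynomial

/-- Turn a formal `Finsupp` of coefficients into an `MvPolynomial`. -/
def ofC (c : (Fin n → ℕ) →₀ ℂ) : MvPolynomial (Fin n) ℂ :=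
  c.sum fun q coef => monomial (Finsupp.equivFunOnFinite.symm q) coef

lemma eval_ofC (c : (Fin n → ℕ) →₀ ℂ) (z : Fin n → ℂ) :
    eval z (ofC c) = c.sum fun q coef => coef * ∏ i, z i ^ q i := by
  rw [ofC, map_finsuppSum]
  refine Finsupp.sum_congr fun q hq => ?_
  rw [eval_monomial]
  congr 1
  rw [Finsupp.prod_fintype]
  · simp
  · intro i; exact pow_zero _

lemma support_ofC {c : (Fin n → ℕ) →₀ ℂ} {d : Fin n →₀ ℕ}
    (hd : d ∈ (ofC c).support) : c ⇑d ≠ 0 := by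
  rw [ofC, Finsupp.sum] at hd
  have := MvPolynomial.support_sum hd
  simp only [Finset.mem_biUnion] at this
  obtain ⟨q, hq, hdq⟩ := this
  have := support_monomial_subset hdq
  simp only [Finset.mem_singleton] at this
  subst this
  simpa using hq

/-- Turn an `MvPolynomial` into a formal `Finsupp` of coefficients. -/
def toC (R : MvPolynomial (Fin n) ℂ) : (Fin n → ℕ) →₀ ℂ where
  support := R.support.map (Finsupp.equivFunOnFinite (α := Fin n) (M := ℕ)).toEmbedding
  toFun := fun q => R.coeff (Finsupp.equivFunOnFinite.symm q)
  mem_support_toFun := fun q => by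
    rw [Finset.mem_map_equiv]
    simp [MvPolynomial.mem_support_iff]

lemma toC_apply (R : MvPolynomial (Fin n) ℂ) (q : Fin n → ℕ) :
    toC R q = R.coeff (Finsupp.equivFunOnFinite.symm q) := rfl

lemma sum_toC (R : MvPolynomial (Fin n) ℂ) (z : Fin n → ℂ) :
    ((toC R).sum fun q coef => coef * ∏ i, z i ^ q i) = eval z R := by
  rw [Finsupp.sum]
  show ∑ q ∈ R.support.map _, (toC R q) * ∏ i, z i ^ q i = _
  rw [Finset.sum_map, eval_eq']
  refine Finset.sum_congr rfl fun d hd => ?_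
  simp [toC_apply]

lemma toC_ne_zero {R : MvPolynomial (Fin n) ℂ} {q : Fin n → ℕ} (h : toC R q ≠ 0) :
    ∃ d ∈ R.support, ⇑d = q := by
  refine ⟨Finsupp.equivFunOnFinite.symm q, ?_, rfl⟩
  rw [MvPolynomial.mem_support_iff]
  exact h

lemma supp_one {d : Fin n →₀ ℕ} (hd : d ∈ (1 : MvPolynomial (Fin n) ℂ).support) :
    d = 0 := by
  by_contra h
  rw [MvPolynomial.mem_support_iff, MvPolynomial.coeff_one] at hd
  simp [h, Ne.symm h] at hd

lemma supp_pow {A : Set (Fin n → ℕ)} {f : MvPolynomial (Fin n) ℂ}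
    (hf : ∀ d ∈ f.support, ⇑d ∈ A) :
    ∀ (k : ℕ), ∀ d ∈ (f ^ k).support, ⇑d ∈ nfold k A := by
  intro k
  induction k with
  | zero =>
    intro d hd
    rw [pow_zero] at hd
    rw [supp_one hd]
    simp [nfold]
  | succ k ih =>
    intro d hd
    rw [pow_succ'] at hd
    have := MvPolynomial.support_mul _ _ hd
    rw [Finset.mem_add] at this
    obtain ⟨d1, hd1, d2, hd2, rfl⟩ := this
    exact ⟨⇑d1, hf d1 hd1, ⇑d2, ih d2 hd2, by simp⟩

lemma supp_prod {ι : Type*} {g : ι → MvPolynomial (Fin n) ℂ} :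
    ∀ (S : Finset ι), ∀ d ∈ (∏ i ∈ S, g i).support,
      ∃ u : ι → (Fin n →₀ ℕ), (∀ i ∈ S, u i ∈ (g i).support) ∧ d = ∑ i ∈ S, u i := by
  classical
  intro S
  induction S using Finset.induction with
  | empty =>
    intro d hd
    rw [Finset.prod_empty] at hd
    exact ⟨0, by simp, by simp [supp_one hd]⟩
  | insert a S ha ih =>
    intro d hd
    rw [Finset.prod_insert ha] at hd
    have := MvPolynomial.support_mul _ _ hd
    rw [Finset.mem_add] at this
    obtain ⟨d1, hd1, d2, hd2, rfl⟩ := this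
    obtain ⟨u, hu, rfl⟩ := ih d2 hd2
    refine ⟨Function.update u a d1, ?_, ?_⟩
    · intro i hi
      rcases Finset.mem_insert.mp hi with rfl | hiS
      · simpa using hd1
      · rw [Function.update_of_ne (fun h => ha (by rwa [h] at hiS))]
        exact hu i hiS
    · rw [Finset.sum_insert ha, Function.update_self]
      congr 1
      refine Finset.sum_congr rfl fun i hi => ?_
      rw [Function.update_of_ne (fun h => ha (by rwa [h] at hi))]

theorem comp_subresonant {β : Fin n → ℂ} {P Q : (Fin n → ℂ) → (Fin n → ℂ)}
    (hP : IsSubResonant β P) (hQ : IsSubResonant β Q) : IsSubResonant β (P ∘ Q) := by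
  classical
  obtain ⟨a, cP, ha, hcP, hPe⟩ := hP
  obtain ⟨b, cQ, hb, hcQ, hQe⟩ := hQ
  set g : Fin n → MvPolynomial (Fin n) ℂ :=
    fun i => monomial (Finsupp.equivFunOnFinite.symm (e i)) (b i) + ofC (cQ i) with hg
  have prod_e : ∀ (z : Fin n → ℂ) (i : Fin n), (∏ l, z l ^ (e i l)) = z i := by
    intro z i; simp [e]
  have evalg : ∀ (z : Fin n → ℂ) (i : Fin n), eval z (g i) = Q z i := by
    intro z i
    rw [hQe z i, hg]
    simp only [map_add, eval_monomial, eval_ofC]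
    congr 1
    rw [Finsupp.prod_fintype _ _ (fun l => pow_zero _)]
    congr 1
    rw [show ⇑(Finsupp.equivFunOnFinite.symm (e i)) = e i from rfl, prod_e]
  have suppg : ∀ i, ∀ d ∈ (g i).support, ⇑d ∈ M β i := by
    intro i d hd
    rcases Finset.mem_union.mp (MvPolynomial.support_add hd) with h | h
    · have := support_monomial_subset h
      rw [Finset.mem_singleton] at this
      subst this
      exact Set.mem_insert _ _
    · exact Set.mem_insert_of_mem _ (hcQ i _ (support_ofC h))
  set R : Fin n → MvPolynomial (Fin n) ℂ :=
    fun j => C (a j) * ofC (cQ j) + (cP j).sum fun q coef => C coef * ∏ i, (g i) ^ (q i)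
    with hR
  have evalR : ∀ (z : Fin n → ℂ) (j : Fin n),
      P (Q z) j = (a j * b j) * z j + eval z (R j) := by
    intro z j
    rw [hPe (Q z) j, hQe z j, hR]
    simp only [map_add, map_mul, eval_C, eval_ofC, map_finsuppSum]
    have : ((cP j).sum fun q coef => coef * eval z (∏ i, (g i) ^ (q i)))
        = (cP j).sum fun q coef => coef * ∏ i, (Q z i) ^ (q i) := by
      refine Finsupp.sum_congr fun q hq => ?_
      simp only [map_prod, map_pow]
      congr 1
      exact Finset.prod_congr rfl fun i _ => by rw [evalg]
    rw [this]
    ring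
  have suppR : ∀ j, ∀ d ∈ (R j).support,
      ⇑d ∈ subResSet β j ∧ ∀ i, j ≤ i → ⇑d i = 0 := by
    intro j d hd
    rcases Finset.mem_union.mp (MvPolynomial.support_add hd) with h | h
    · rw [MvPolynomial.C_mul'] at h
      exact hcQ j _ (support_ofC (MvPolynomial.support_smul h))
    · rw [Finsupp.sum] at h
      obtain ⟨q, hq, hdq⟩ := Finset.mem_biUnion.mp (MvPolynomial.support_sum h)
      have hq' : cP j q ≠ 0 := by simpa using hq
      obtain ⟨hqsub, hqvan⟩ := hcP j q hq'
      rw [MvPolynomial.C_mul'] at hdq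
      have hdq' := MvPolynomial.support_smul hdq
      obtain ⟨u, hu, rfl⟩ := supp_prod Finset.univ _ hdq'
      have hcoe : ⇑(∑ i, u i) = ∑ i, ⇑(u i) := by
        simp [Finsupp.coe_finset_sum]
      have hnf : ∀ i, ⇑(u i) ∈ nfold (q i) (M β i) :=
        fun i => supp_pow (suppg i) (q i) (u i) (hu i (Finset.mem_univ i))
      have := closure hqsub hqvan hnf
      rw [hcoe]
      exact ⟨this.1, this.2⟩
  refine ⟨fun j => a j * b j, fun j => toC (R j), fun j => mul_ne_zero (ha j) (hb j),
    ?_, ?_⟩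
  · intro j q hq
    obtain ⟨d, hd, rfl⟩ := toC_ne_zero hq
    exact suppR j d hd
  · intro z j
    rw [Function.comp_apply, evalR z j, sum_toC]

/-- smoothness of a map in sub-resonant normal form -/
lemma contDiff_form (a : Fin n → ℂ) (c : Fin n → ((Fin n → ℕ) →₀ ℂ)) :
    ContDiff ℂ ⊤ (fun z : Fin n → ℂ =>
      fun j => a j * z j + (c j).sum fun q coef => coef * ∏ i, z i ^ q i) := by
  rw [contDiff_pi]
  intro j
  apply ContDiff.add
  · exact contDiff_const.mul ((ContinuousLinearMap.proj (R := ℂ) (φ := fun _ : Fin n => ℂ) j).contDiff)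
  · rw [show (fun z : Fin n → ℂ => (c j).sum fun q coef => coef * ∏ i, z i ^ q i)
        = fun z : Fin n → ℂ => ∑ q ∈ (c j).support, (c j) q * ∏ i, z i ^ q i from rfl]
    apply ContDiff.sum
    intro q _
    apply contDiff_const.mul
    apply contDiff_prod
    intro i _
    have hzi : ContDiff ℂ ⊤ (fun z : Fin n → ℂ => z i) := (ContinuousLinearMap.proj (R := ℂ) (φ := fun _ : Fin n => ℂ) i).contDiff
    exact hzi.pow _

lemma iteratedDeriv_polyEval (p : Polynomial ℂ) (m : ℕ) (x : ℂ) :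
    iteratedDeriv m (fun t => p.eval t) x = (Polynomial.derivative^[m] p).eval x := by
  induction m generalizing p with
  | zero => simp
  | succ m ih =>
    have hd : deriv (fun t => Polynomial.eval t p)
        = fun t => Polynomial.eval t (Polynomial.derivative p) := by
      funext t
      exact Polynomial.deriv (𝕜 := ℂ) (x := t) (p := p)
    rw [iteratedDeriv_succ', hd, ih, Function.iterate_succ_apply]

lemma poly_eq_of_jets {p q : Polynomial ℂ} {k : ℕ} (hp : p.natDegree ≤ k)
    (hq : q.natDegree ≤ k)
    (h : ∀ m ≤ k, iteratedDeriv m (fun t => p.eval t) 0 =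
      iteratedDeriv m (fun t => q.eval t) 0) : p = q := by
  ext m
  rcases le_or_gt m k with hm | hm
  · have := h m hm
    rw [iteratedDeriv_polyEval, iteratedDeriv_polyEval] at this
    rw [← Polynomial.coeff_zero_eq_eval_zero, ← Polynomial.coeff_zero_eq_eval_zero,
      Polynomial.coeff_iterate_derivative, Polynomial.coeff_iterate_derivative] at this
    simp only [zero_add] at this
    have hfac : (m.descFactorial m : ℂ) ≠ 0 := by
      rw [Nat.descFactorial_self]
      exact_mod_cast Nat.factorial_ne_zero m
    have := this
    rw [nsmul_eq_mul, nsmul_eq_mul] at this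
    exact mul_left_cancel₀ hfac this
  · rw [Polynomial.coeff_eq_zero_of_natDegree_lt (lt_of_le_of_lt hp hm),
      Polynomial.coeff_eq_zero_of_natDegree_lt (lt_of_le_of_lt hq hm)]

lemma jet_eq_1d {P Q : (Fin n → ℂ) → (Fin n → ℂ)} (hPc : ContDiff ℂ ⊤ P)
    (hQc : ContDiff ℂ ⊤ Q) {k m : ℕ} (hm : m ≤ k)
    (hjet : ∀ m ≤ k, iteratedFDeriv ℂ m P 0 = iteratedFDeriv ℂ m Q 0)
    (z : Fin n → ℂ) (j : Fin n) :
    iteratedDeriv m (fun t : ℂ => P (t • z) j) 0 =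
      iteratedDeriv m (fun t : ℂ => Q (t • z) j) 0 := by
  set L : ℂ →L[ℂ] (Fin n → ℂ) := ContinuousLinearMap.toSpanSingleton ℂ z with hL
  set π : (Fin n → ℂ) →L[ℂ] ℂ := ContinuousLinearMap.proj j with hπ
  have hfun : ∀ R : (Fin n → ℂ) → (Fin n → ℂ), (fun t : ℂ => R (t • z) j) = ⇑π ∘ (R ∘ ⇑L) := by
    intro R
    funext t
    simp [hL, hπ, ContinuousLinearMap.toSpanSingleton_apply]
  have key : ∀ R : (Fin n → ℂ) → (Fin n → ℂ), ContDiff ℂ ⊤ R →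
      iteratedFDeriv ℂ m (⇑π ∘ (R ∘ ⇑L)) 0 =
        π.compContinuousMultilinearMap
          ((iteratedFDeriv ℂ m R 0).compContinuousLinearMap fun _ => L) := by
    intro R hR
    rw [ContinuousLinearMap.iteratedFDeriv_comp_left π (hR.comp L.contDiff).contDiffAt le_top,
      ContinuousLinearMap.iteratedFDeriv_comp_right L hR 0 le_top, map_zero]
  rw [iteratedDeriv_eq_iteratedFDeriv, iteratedDeriv_eq_iteratedFDeriv, hfun P, hfun Q,
    key P hPc, key Q hQc, hjet m hm]

lemma eval_poly1d (a : ℂ) (zj : ℂ) (c : (Fin n → ℕ) →₀ ℂ) (z : Fin n → ℂ) (t : ℂ) :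
    Polynomial.eval t (Polynomial.C (a * zj) * Polynomial.X +
      ∑ q ∈ c.support, Polynomial.C (c q * ∏ i, z i ^ q i) * Polynomial.X ^ (∑ i, q i))
    = a * (t * zj) + c.sum fun q coef => coef * ∏ i, (t * z i) ^ q i := by
  rw [Finsupp.sum]
  simp only [Polynomial.eval_add, Polynomial.eval_mul, Polynomial.eval_C, Polynomial.eval_X,
    Polynomial.eval_finset_sum, Polynomial.eval_pow]
  congr 1
  · ring
  refine Finset.sum_congr rfl fun q hq => ?_
  have : ∏ i, (t * z i) ^ q i = t ^ (∑ i, q i) * ∏ i, z i ^ q i := by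
    rw [← Finset.prod_pow_eq_pow_sum, ← Finset.prod_mul_distrib]
    exact Finset.prod_congr rfl fun i _ => mul_pow _ _ _
  rw [this]
  ring

lemma eq_of_jets {r k : ℕ} (hrk : r ≤ k) (h1r : 1 ≤ r)
    {P Q : (Fin n → ℂ) → (Fin n → ℂ)}
    (a b : Fin n → ℂ) (cP cQ : Fin n → ((Fin n → ℕ) →₀ ℂ))
    (hdegP : ∀ j q, cP j q ≠ 0 → ∑ i, q i ≤ r)
    (hdegQ : ∀ j q, cQ j q ≠ 0 → ∑ i, q i ≤ r)
    (hPe : ∀ z j, P z j = a j * z j + (cP j).sum fun q coef => coef * ∏ i, z i ^ q i)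
    (hQe : ∀ z j, Q z j = b j * z j + (cQ j).sum fun q coef => coef * ∏ i, z i ^ q i)
    (hjet : ∀ m ≤ k, iteratedFDeriv ℂ m P 0 = iteratedFDeriv ℂ m Q 0) :
    P = Q := by
  have hPc : ContDiff ℂ ⊤ P := by
    rw [show P = (fun z => fun j => a j * z j + (cP j).sum fun q coef => coef * ∏ i, z i ^ q i)
      from funext fun z => funext fun j => hPe z j]
    exact contDiff_form a cP
  have hQc : ContDiff ℂ ⊤ Q := by
    rw [show Q = (fun z => fun j => b j * z j + (cQ j).sum fun q coef => coef * ∏ i, z i ^ q i)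
      from funext fun z => funext fun j => hQe z j]
    exact contDiff_form b cQ
  funext z j
  set pp : Polynomial ℂ := Polynomial.C (a j * z j) * Polynomial.X +
    ∑ q ∈ (cP j).support, Polynomial.C (cP j q * ∏ i, z i ^ q i) * Polynomial.X ^ (∑ i, q i)
    with hpp
  set pq : Polynomial ℂ := Polynomial.C (b j * z j) * Polynomial.X +
    ∑ q ∈ (cQ j).support, Polynomial.C (cQ j q * ∏ i, z i ^ q i) * Polynomial.X ^ (∑ i, q i)
    with hpq
  have hp1 : (fun t : ℂ => P (t • z) j) = fun t => Polynomial.eval t pp := by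
    funext t
    rw [hPe (t • z) j, hpp, eval_poly1d]
    simp only [Pi.smul_apply, smul_eq_mul]
  have hq1 : (fun t : ℂ => Q (t • z) j) = fun t => Polynomial.eval t pq := by
    funext t
    rw [hQe (t • z) j, hpq, eval_poly1d]
    simp only [Pi.smul_apply, smul_eq_mul]
  have hdeg : ∀ (u : Fin n → ℂ) (c : (Fin n → ℕ) →₀ ℂ),
      (∀ q, c q ≠ 0 → ∑ i, q i ≤ r) →
      (Polynomial.C (u j * z j) * Polynomial.X +
        ∑ q ∈ c.support, Polynomial.C (c q * ∏ i, z i ^ q i) *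
          Polynomial.X ^ (∑ i, q i)).natDegree ≤ k := by
    intro u c hc
    refine le_trans (Polynomial.natDegree_add_le _ _) (max_le ?_ ?_)
    · exact le_trans (Polynomial.natDegree_C_mul_le _ _)
        (le_trans Polynomial.natDegree_X_le (le_trans h1r hrk))
    · apply Polynomial.natDegree_sum_le_of_forall_le
      intro q hq
      refine le_trans (Polynomial.natDegree_C_mul_le _ _) ?_
      rw [Polynomial.natDegree_X_pow]
      exact le_trans (hc q (Finsupp.mem_support_iff.mp hq)) hrk
  have hppq : pp = pq := by
    apply poly_eq_of_jets (hdeg a (cP j) (hdegP j)) (hdeg b (cQ j) (hdegQ j))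
    intro m hm
    rw [← hp1, ← hq1]
    exact jet_eq_1d hPc hQc hm hjet z j
  have e1 := congrFun hp1 1
  have e2 := congrFun hq1 1
  simp only [one_smul] at e1 e2
  rw [e1, e2, hppq]

end SubResAux

/-- if `r` bounds the lengths of all resonances of `β`, then every
β sub-resonant polynomial transformation is a polynomial map of degree at most
`r` (all its monomials `z^q` satisfy `|q| ≤ r`), and for every `k ≥ r` the
`k`-jet at `0` determines the map: two sub-resonant maps with the same
derivatives at `0` up to order `k` are equal (so the `k`-jet map
`G^r_β → 𝒟^k(ℂⁿ)` is an injective group homomorphism, composition being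
preserved). -/
theorem subresonant_degree_bound_and_jet_injective {n : ℕ} (β : Fin n → ℂ)
    (h1 : ∀ i, ‖β i‖ < 1)
    (hpos : ∀ i, 0 < ‖β i‖)
    (hmono : ∀ i j : Fin n, i ≤ j → ‖β j‖ ≤ ‖β i‖)
    (r : ℕ)
    (hr : ∀ (j : Fin n) (p : Fin n → ℕ), p ≠ 0 → β j = bpow β p → ∑ i, p i ≤ r) :
    (∀ P : (Fin n → ℂ) → (Fin n → ℂ), IsSubResonant β P →
      ∃ (a : Fin n → ℂ) (c : Fin n → ((Fin n → ℕ) →₀ ℂ)),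
        (∀ j, a j ≠ 0) ∧
        (∀ j q, c j q ≠ 0 →
          q ∈ subResSet β j ∧ (∀ i, j ≤ i → q i = 0) ∧ ∑ i, q i ≤ r) ∧
        ∀ (z : Fin n → ℂ) (j : Fin n),
          P z j = a j * z j + (c j).sum fun q coef => coef * ∏ i, z i ^ q i) ∧
    (∀ P Q : (Fin n → ℂ) → (Fin n → ℂ), IsSubResonant β P → IsSubResonant β Q →
      IsSubResonant β (P ∘ Q)) ∧
    (∀ k : ℕ, r ≤ k →
      ∀ P Q : (Fin n → ℂ) → (Fin n → ℂ), IsSubResonant β P → IsSubResonant β Q →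
        (∀ m : ℕ, m ≤ k → iteratedFDeriv ℂ m P 0 = iteratedFDeriv ℂ m Q 0) →
        P = Q) := by
  classical
  have part1 : ∀ P : (Fin n → ℂ) → (Fin n → ℂ), IsSubResonant β P →
      ∃ (a : Fin n → ℂ) (c : Fin n → ((Fin n → ℕ) →₀ ℂ)),
        (∀ j, a j ≠ 0) ∧
        (∀ j q, c j q ≠ 0 →
          q ∈ subResSet β j ∧ (∀ i, j ≤ i → q i = 0) ∧ ∑ i, q i ≤ r) ∧
        ∀ (z : Fin n → ℂ) (j : Fin n),
          P z j = a j * z j + (c j).sum fun q coef => coef * ∏ i, z i ^ q i := by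
    intro P hP
    obtain ⟨a, c, ha, hc, he⟩ := hP
    refine ⟨a, c, ha, fun j q hq => ?_, he⟩
    obtain ⟨hsub, hvan⟩ := hc j q hq
    refine ⟨hsub, hvan, ?_⟩
    obtain ⟨hne, p, ⟨hres, _⟩, hle⟩ := hsub
    have hp0 : p ≠ 0 := by
      intro h
      apply hne
      funext l
      have h2 := hle l
      rw [h] at h2
      simpa using h2
    exact le_trans (Finset.sum_le_sum fun i _ => hle i) (hr j p hp0 hres)
  refine ⟨part1, fun P Q hP hQ => SubResAux.comp_subresonant hP hQ, ?_⟩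
  intro k hk P Q hP hQ hjet
  rcases Nat.eq_zero_or_pos n with hn | hn
  · funext z j
    exact absurd j.isLt (by omega)
  · have h1r : 1 ≤ r := by
      have := hr ⟨0, hn⟩ (SubResAux.e ⟨0, hn⟩) (SubResAux.e_ne_zero ⟨0, hn⟩)
        (SubResAux.bpow_e β ⟨0, hn⟩).symm
      rwa [SubResAux.sum_e] at this
    obtain ⟨a, cP, ha, hcP, hPe⟩ := part1 P hP
    obtain ⟨b, cQ, hb, hcQ, hQe⟩ := part1 Q hQ
    exact SubResAux.eq_of_jets hk h1r a b cP cQ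
      (fun j q hq => (hcP j q hq).2.2) (fun j q hq => (hcQ j q hq).2.2)
      hPe hQe hjet
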